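/- Let R_j = Y_j - (1/n)∑_{i=1}^n Y_i and define W_j = R_{j+1} + (1/(√n - 1)) R_1 for j = 1,…,n-1. Then ∑_{j=1}^{n-1} W_j² = ∑_{j=1}^n R_j² for any real Y_1,…,Y_n. -/

import Mathlib

theorem stmt_1 (n : ℕ) (hn : 2 ≤ n) (Y R W : ℕ → ℝ)
    (hR : ∀ j, R j = Y j - (∑ i ∈ Finset.range n, Y i) / n)
    (hW : ∀ j, W j = R (j + 1) + (1 / (Real.sqrt n - 1)) * R 0) :
    ∑ j ∈ Finset.range (n - 1), (W j) ^ 2 = ∑ j ∈ Finset.range n, (R j) ^ 2 := by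
  have hn0 : (n : ℝ) ≠ 0 := by positivity
  set s := Real.sqrt n with hs
  have hs2 : s ^ 2 = n := Real.sq_sqrt (by positivity)
  have hs1 : 1 < s := by
    have : (1:ℝ) < n := by exact_mod_cast lt_of_lt_of_le one_lt_two hn
    nlinarith [Real.sqrt_nonneg (n:ℝ)]
  have hsne : s - 1 ≠ 0 := by linarith
  set c := 1 / (s - 1) with hc
  have hsum : ∑ j ∈ Finset.range n, R j = 0 := by
    simp only [hR]
    rw [Finset.sum_sub_distrib, Finset.sum_const, Finset.card_range, nsmul_eq_mul]
    field_simp; ring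
  have hne : n - 1 + 1 = n := by omega
  have key : ∀ f : ℕ → ℝ, ∑ j ∈ Finset.range n, f j
      = ∑ j ∈ Finset.range (n - 1), f (j + 1) + f 0 := by
    intro f
    conv_lhs => rw [← hne]
    rw [Finset.sum_range_succ']
  have h1 : ∑ j ∈ Finset.range (n - 1), R (j + 1) = -R 0 := by
    have := key R; linarith [hsum]
  have h2 : ∑ j ∈ Finset.range (n - 1), R (j + 1) ^ 2
      = ∑ j ∈ Finset.range n, R j ^ 2 - R 0 ^ 2 := by
    have := key (fun j => R j ^ 2); linarith
  have hWx : ∀ j, W j ^ 2 = R (j+1) ^ 2 + (2 * c * R 0) * R (j+1) + c ^ 2 * R 0 ^ 2 := by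
    intro j; rw [hW j]; ring
  simp only [hWx]
  rw [Finset.sum_add_distrib, Finset.sum_add_distrib, ← Finset.mul_sum, h1, h2,
    Finset.sum_const, Finset.card_range, nsmul_eq_mul]
  have hcard : ((n - 1 : ℕ) : ℝ) = (n : ℝ) - 1 := by
    have : (1:ℕ) ≤ n := by omega
    push_cast [this]; ring
  rw [hcard]
  have halg : ((n:ℝ) - 1) * c ^ 2 - 2 * c - 1 = 0 := by
    rw [hc, ← hs2]; field_simp; ring
  nlinarith [halg, sq_nonneg (R 0)]
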